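/- arXiv:2402.12695 — 2 statements merged into one kernel-verified Lean document; each statement's English description precedes it below -/
import Mathlib

section
/- Let m, n ≥ 3 and ℓ ∈ Z/nZ. Suppose the Cartesian product C_m □ C_n has a 2-factor F consisting of three cycles that separates a set {x, y, z} of three vertices, and suppose F contains no edge joining a vertex of column m−2 to a vertex of column m−1. Then the pseudo-Cartesian product C_m □_ℓ C_n has a 2-factor consisting of three cycles that separates the set obtained from {x, y, z} by replacing each vertex u_{m−1,j} lying in column m−1 by u_{m−1,j−ℓ} and leaving all vertices not in column m−1 unchanged. -/
open SimpleGraph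

/-- `H` is a 2-factor of `X`: a spanning subgraph of `X` (on the same vertex set)
in which every vertex has valency 2. -/
def IsTwoFactor {V : Type*} (X H : SimpleGraph V) : Prop :=
  H ≤ X ∧ ∀ v : V, (H.neighborSet v).ncard = 2

/-- The 2-factor `H` separates the vertex set `A`: every connected component (cycle)
of `H` contains exactly one vertex of `A`; in particular `H` consists of exactly
`A.card` cycles, each containing exactly one vertex of `A`. -/
def SeparatesSet {V : Type*} (H : SimpleGraph V) (A : Finset V) : Prop :=
  ∀ C : H.ConnectedComponent, ∃! a : V, a ∈ A ∧ H.connectedComponentMk a = C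

/-- A graph `X` is `k`-spanning cyclable if for every set `A` of `k` distinct vertices
there is a 2-factor of `X` consisting of `k` cycles such that each vertex of `A`
belongs to a distinct cycle. -/
def SpanningCyclable {V : Type*} (X : SimpleGraph V) (k : ℕ) : Prop :=
  ∀ A : Finset V, A.card = k → ∃ H : SimpleGraph V, IsTwoFactor X H ∧ SeparatesSet H A

/-- The cycle `C_n` on vertex set `ZMod n`: `x` and `y` are adjacent iff `x - y ∈ {1, -1}`. -/
def cycleZMod (n : ℕ) : SimpleGraph (ZMod n) :=
  SimpleGraph.circulantGraph ({1, -1} : Set (ZMod n))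

/-- The pseudo-Cartesian product `C_m □_ℓ C_n`: start with `P_m □ C_n` (columns indexed by
`Fin m`, rows by `ZMod n`) and add the edges from `u_{m-1,j}` to `u_{0,j+ℓ}`.
When `ℓ = 0` this is the Cartesian product `C_m □ C_n`. -/
def pseudoProd (m n : ℕ) (l : ZMod n) : SimpleGraph (Fin m × ZMod n) :=
  SimpleGraph.fromRel (fun u v =>
    (u.1 = v.1 ∧ v.2 = u.2 + 1) ∨
    ((u.1 : ℕ) + 1 = (v.1 : ℕ) ∧ u.2 = v.2) ∨
    ((u.1 : ℕ) = m - 1 ∧ (v.1 : ℕ) = 0 ∧ v.2 = u.2 + l))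


def shiftEquiv (m n : ℕ) (l : ZMod n) : (Fin m × ZMod n) ≃ (Fin m × ZMod n) where
  toFun w := if (w.1 : ℕ) = m - 1 then (w.1, w.2 - l) else w
  invFun w := if (w.1 : ℕ) = m - 1 then (w.1, w.2 + l) else w
  left_inv w := by by_cases h : (w.1 : ℕ) = m - 1 <;> simp [h]
  right_inv w := by by_cases h : (w.1 : ℕ) = m - 1 <;> simp [h]

def shiftGraph (m n : ℕ) (l : ZMod n) (F : SimpleGraph (Fin m × ZMod n)) :
    SimpleGraph (Fin m × ZMod n) where
  Adj a b := F.Adj ((shiftEquiv m n l).symm a) ((shiftEquiv m n l).symm b)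
  symm := ⟨fun a b h => F.adj_symm h⟩
  loopless := ⟨fun a h => F.irrefl h⟩

lemma shiftGraph_adj (m n : ℕ) (l : ZMod n) (F : SimpleGraph (Fin m × ZMod n))
    (a b : Fin m × ZMod n) :
    (shiftGraph m n l F).Adj a b ↔
      F.Adj ((shiftEquiv m n l).symm a) ((shiftEquiv m n l).symm b) := Iff.rfl

lemma shiftGraph_adj' (m n : ℕ) (l : ZMod n) (F : SimpleGraph (Fin m × ZMod n))
    (u v : Fin m × ZMod n) :
    (shiftGraph m n l F).Adj (shiftEquiv m n l u) (shiftEquiv m n l v) ↔ F.Adj u v := by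
  rw [shiftGraph_adj, Equiv.symm_apply_apply, Equiv.symm_apply_apply]

/-- key step: each F-edge maps to an edge of pseudoProd m n l -/
lemma step (m n : ℕ) (hm : 3 ≤ m) (l : ZMod n)
    (F : SimpleGraph (Fin m × ZMod n))
    (hedge : ∀ u v : Fin m × ZMod n, F.Adj u v →
      ¬((u.1 : ℕ) = m - 2 ∧ (v.1 : ℕ) = m - 1))
    (u v : Fin m × ZMod n) (hadj : F.Adj u v)
    (h : (u.1 = v.1 ∧ v.2 = u.2 + 1) ∨
    ((u.1 : ℕ) + 1 = (v.1 : ℕ) ∧ u.2 = v.2) ∨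
    ((u.1 : ℕ) = m - 1 ∧ (v.1 : ℕ) = 0 ∧ v.2 = u.2 + 0)) :
    (((shiftEquiv m n l u).1 = (shiftEquiv m n l v).1 ∧
        (shiftEquiv m n l v).2 = (shiftEquiv m n l u).2 + 1) ∨
    (((shiftEquiv m n l u).1 : ℕ) + 1 = ((shiftEquiv m n l v).1 : ℕ) ∧
        (shiftEquiv m n l u).2 = (shiftEquiv m n l v).2) ∨
    (((shiftEquiv m n l u).1 : ℕ) = m - 1 ∧ ((shiftEquiv m n l v).1 : ℕ) = 0 ∧
        (shiftEquiv m n l v).2 = (shiftEquiv m n l u).2 + l)) := by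
  rcases h with ⟨h1, h2⟩ | ⟨h1, h2⟩ | ⟨h1, h2, h3⟩
  · left
    by_cases hc : (u.1 : ℕ) = m - 1
    · have hc' : (v.1 : ℕ) = m - 1 := h1 ▸ hc
      simp only [shiftEquiv, Equiv.coe_fn_mk, hc, hc', if_pos]
      exact ⟨h1, by rw [h2]; ring⟩
    · have hc' : ¬ (v.1 : ℕ) = m - 1 := h1 ▸ hc
      simp only [shiftEquiv, Equiv.coe_fn_mk, hc, hc', if_neg, if_false]
      exact ⟨h1, h2⟩
  · have hu : ¬ (u.1 : ℕ) = m - 1 := by have := v.1.is_lt; omega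
    have hv : ¬ (v.1 : ℕ) = m - 1 := by
      intro hv
      exact hedge u v hadj ⟨by omega, hv⟩
    right; left
    simp only [shiftEquiv, Equiv.coe_fn_mk, hu, hv, if_false]
    exact ⟨h1, h2⟩
  · have hv : ¬ (v.1 : ℕ) = m - 1 := by omega
    right; right
    simp only [shiftEquiv, Equiv.coe_fn_mk]
    rw [if_pos h1, if_neg hv]
    exact ⟨h1, h2, by rw [h3]; ring⟩

lemma main_le (m n : ℕ) (hm : 3 ≤ m) (l : ZMod n)
    (F : SimpleGraph (Fin m × ZMod n))
    (hle : F ≤ pseudoProd m n 0)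
    (hedge : ∀ u v : Fin m × ZMod n, F.Adj u v →
      ¬((u.1 : ℕ) = m - 2 ∧ (v.1 : ℕ) = m - 1))
    (u v : Fin m × ZMod n) (hadj : F.Adj u v) :
    (pseudoProd m n l).Adj (shiftEquiv m n l u) (shiftEquiv m n l v) := by
  have h0 := hle hadj
  rw [pseudoProd, SimpleGraph.fromRel_adj] at h0 ⊢
  obtain ⟨hne, h⟩ := h0
  refine ⟨(shiftEquiv m n l).injective.ne hne, ?_⟩
  rcases h with h | h
  · exact Or.inl (step m n hm l F hedge u v hadj h)
  · exact Or.inr (step m n hm l F hedge v u hadj.symm h)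

lemma shift_neighborSet (m n : ℕ) (l : ZMod n) (F : SimpleGraph (Fin m × ZMod n))
    (v : Fin m × ZMod n) :
    (shiftGraph m n l F).neighborSet v =
      (shiftEquiv m n l) '' (F.neighborSet ((shiftEquiv m n l).symm v)) := by
  rw [Equiv.image_eq_preimage_symm]
  rfl

def shiftHom (m n : ℕ) (l : ZMod n) (F : SimpleGraph (Fin m × ZMod n)) :
    F →g shiftGraph m n l F where
  toFun := shiftEquiv m n l
  map_rel' h := by rwa [shiftGraph_adj']

def shiftHomInv (m n : ℕ) (l : ZMod n) (F : SimpleGraph (Fin m × ZMod n)) :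
    shiftGraph m n l F →g F where
  toFun := (shiftEquiv m n l).symm
  map_rel' h := h

lemma shift_reachable (m n : ℕ) (l : ZMod n) (F : SimpleGraph (Fin m × ZMod n))
    (u v : Fin m × ZMod n) :
    (shiftGraph m n l F).Reachable (shiftEquiv m n l u) (shiftEquiv m n l v) ↔
      F.Reachable u v := by
  constructor
  · intro h
    have h2 : F.Reachable ((shiftEquiv m n l).symm (shiftEquiv m n l u))
        ((shiftEquiv m n l).symm (shiftEquiv m n l v)) := h.map (shiftHomInv m n l F)
    simpa using h2
  · intro h
    exact h.map (shiftHom m n l F)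


theorem statement_10' (m n : ℕ) (hm : 3 ≤ m) (hn : 3 ≤ n) (l : ZMod n)
    (x y z : Fin m × ZMod n) (hxy : x ≠ y) (hxz : x ≠ z) (hyz : y ≠ z)
    (F : SimpleGraph (Fin m × ZMod n))
    (hF : F ≤ pseudoProd m n 0 ∧ ∀ v, (F.neighborSet v).ncard = 2)
    (hsep : ∀ C : F.ConnectedComponent,
      ∃! a, a ∈ ({x, y, z} : Finset (Fin m × ZMod n)) ∧ F.connectedComponentMk a = C)
    (hedge : ∀ u v : Fin m × ZMod n, F.Adj u v →
      ¬((u.1 : ℕ) = m - 2 ∧ (v.1 : ℕ) = m - 1)) :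
    ∃ H, (H ≤ pseudoProd m n l ∧ ∀ v, (H.neighborSet v).ncard = 2) ∧
      ∀ C : H.ConnectedComponent,
        ∃! a, a ∈ (({x, y, z} : Finset (Fin m × ZMod n)).image
          (fun w => if (w.1 : ℕ) = m - 1 then (w.1, w.2 - l) else w)) ∧
          H.connectedComponentMk a = C := by
  set e := shiftEquiv m n l with he
  have himg : ∀ w : Fin m × ZMod n,
      (fun w => if (w.1 : ℕ) = m - 1 then (w.1, w.2 - l) else w) w = e w := fun _ => rfl
  refine ⟨shiftGraph m n l F, ⟨?_, ?_⟩, ?_⟩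
  · intro a b hab
    have := main_le m n hm l F hF.1 hedge (e.symm a) (e.symm b) hab
    simpa [he] using this
  · intro v
    rw [shift_neighborSet, Set.ncard_image_of_injective _ e.injective]
    exact hF.2 _
  · intro C
    induction C using SimpleGraph.ConnectedComponent.ind with
    | _ c =>
      obtain ⟨a, ⟨haA, hac⟩, huniq⟩ := hsep (F.connectedComponentMk (e.symm c))
      refine ⟨e a, ⟨?_, ?_⟩, ?_⟩
      · rw [Finset.mem_image]; exact ⟨a, haA, rfl⟩
      · rw [SimpleGraph.ConnectedComponent.eq]
        have : F.Reachable a (e.symm c) := SimpleGraph.ConnectedComponent.eq.mp hac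
        have := (shift_reachable m n l F a (e.symm c)).mpr this
        rwa [Equiv.apply_symm_apply] at this
      · rintro b ⟨hbA, hbc⟩
        rw [Finset.mem_image] at hbA
        obtain ⟨a', ha'A, hab⟩ := hbA
        have hab' : e a' = b := hab
        subst hab'
        rw [SimpleGraph.ConnectedComponent.eq] at hbc
        have : F.Reachable a' (e.symm c) := by
          have := hbc
          rw [show c = e (e.symm c) from (Equiv.apply_symm_apply e c).symm] at this
          exact (shift_reachable m n l F a' (e.symm c)).mp this
        have := huniq a' ⟨ha'A, SimpleGraph.ConnectedComponent.eq.mpr this⟩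
        rw [this]


/-- If `C_m □ C_n` has a 2-factor `F` of three cycles separating three
vertices `x, y, z` and `F` uses no edge between column `m-2` and column `m-1`, then
`C_m □_ℓ C_n` has a 2-factor of three cycles separating the set obtained from
`{x, y, z}` by shifting each vertex in column `m-1` by `-ℓ`. -/
theorem statement_10 (m n : ℕ) (hm : 3 ≤ m) (hn : 3 ≤ n) (l : ZMod n)
    (x y z : Fin m × ZMod n) (hxy : x ≠ y) (hxz : x ≠ z) (hyz : y ≠ z)
    (F : SimpleGraph (Fin m × ZMod n))
    (hF : IsTwoFactor (pseudoProd m n 0) F)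
    (hsep : SeparatesSet F {x, y, z})
    (hedge : ∀ u v : Fin m × ZMod n, F.Adj u v →
      ¬((u.1 : ℕ) = m - 2 ∧ (v.1 : ℕ) = m - 1)) :
    ∃ H, IsTwoFactor (pseudoProd m n l) H ∧
      SeparatesSet H (({x, y, z} : Finset (Fin m × ZMod n)).image
        (fun w => if (w.1 : ℕ) = m - 1 then (w.1, w.2 - l) else w)) := by
  exact statement_10' m n hm hn l x y z hxy hxz hyz F hF hsep hedge
end

section
/- For m ≥ 3 and ℓ ∈ Z/3Z, the pseudo-Cartesian product C_m □_ℓ C_3 is 3-spanning cyclable if and only if m ≥ 4 and ℓ = 0. -/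
open SimpleGraph

section Generic
variable {V : Type*}

/-- Data for one explicitly parametrized cycle inside `X`. -/
structure CycData (V : Type*) (X : SimpleGraph V) where
  L : ℕ
  hL : 3 ≤ L
  c : ℕ → V
  per : ∀ n, c (n + L) = c n
  injw : ∀ a b, a < L → b < L → c a = c b → a = b
  adj : ∀ n, X.Adj (c n) (c (n + 1))

namespace CycData
variable {X : SimpleGraph V} (D : CycData V X)

lemma c_mod : ∀ n, D.c n = D.c (n % D.L) := by
  intro n
  induction n using Nat.strong_induction_on with
  | _ n ih =>
    rcases lt_or_ge n D.L with h | h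
    · rw [Nat.mod_eq_of_lt h]
    · have h1 : n = (n - D.L) + D.L := by omega
      have h2 : n % D.L = (n - D.L) % D.L := by
        conv_lhs => rw [h1]
        rw [Nat.add_mod_right]
      rw [h2, ← ih (n - D.L) (by have := D.hL; omega)]
      conv_lhs => rw [h1, D.per]

lemma c_congr {a b : ℕ} (h : a % D.L = b % D.L) : D.c a = D.c b := by
  rw [D.c_mod a, D.c_mod b, h]

lemma c_eq_iff {a b : ℕ} : D.c a = D.c b ↔ a % D.L = b % D.L := by
  constructor
  · intro h
    have hL : 0 < D.L := by have := D.hL; omega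
    exact D.injw (a % D.L) (b % D.L) (Nat.mod_lt _ hL) (Nat.mod_lt _ hL)
      (by rw [← D.c_mod, ← D.c_mod]; exact h)
  · exact D.c_congr

lemma c_ne {n k : ℕ} (h0 : 0 < k) (h1 : k < D.L) : D.c n ≠ D.c (n + k) := by
  rw [Ne, c_eq_iff]
  intro h
  have : n ≡ n + k [MOD D.L] := h
  have := (Nat.modEq_iff_dvd' (Nat.le_add_right n k)).1 this
  simp only [Nat.add_sub_cancel_left] at this
  exact absurd (Nat.le_of_dvd h0 this) (by omega)

end CycData

variable {X : SimpleGraph V} (Ds : Fin 3 → CycData V X)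

/-- The union of three explicit cycles, as a graph. -/
def cycUnion : SimpleGraph V :=
  fromRel (fun v w => ∃ t n, v = (Ds t).c n ∧ w = (Ds t).c (n + 1))

variable (hdisj : ∀ s t a b, (Ds s).c a = (Ds t).c b → s = t)

section
include hdisj

lemma cycUnion_nbhd (t : Fin 3) (n : ℕ) :
    (cycUnion Ds).neighborSet ((Ds t).c n) =
      {(Ds t).c (n + 1), (Ds t).c (n + ((Ds t).L - 1))} := by
  have hL := (Ds t).hL
  ext w
  simp only [mem_neighborSet, Set.mem_insert_iff, Set.mem_singleton_iff, cycUnion,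
    fromRel_adj]
  constructor
  · rintro ⟨hne, (⟨s, k, hv, hw⟩ | ⟨s, k, hw, hv⟩)⟩
    · obtain rfl : s = t := (hdisj s t k n hv.symm)
      have hk : k % (Ds s).L = n % (Ds s).L := (Ds s).c_eq_iff.1 hv.symm
      left
      rw [hw]
      exact (Ds s).c_congr (Nat.ModEq.add_right 1 hk)
    · obtain rfl : s = t := (hdisj s t (k+1) n hv.symm)
      have hk : (k + 1) % (Ds s).L = n % (Ds s).L := (Ds s).c_eq_iff.1 hv.symm
      right
      rw [hw]
      apply (Ds s).c_congr
      have h1 : k + 1 + ((Ds s).L - 1) ≡ n + ((Ds s).L - 1) [MOD (Ds s).L] :=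
        Nat.ModEq.add_right _ hk
      have h2 : k + 1 + ((Ds s).L - 1) = k + (Ds s).L := by
        have := (Ds s).hL; omega
      rw [h2] at h1
      have h3 : k + (Ds s).L ≡ k [MOD (Ds s).L] := by
        unfold Nat.ModEq; rw [Nat.add_mod_right]
      exact (h3.symm.trans h1)
  · rintro (rfl | rfl)
    · exact ⟨(Ds t).c_ne (by omega) (by omega), Or.inl ⟨t, n, rfl, rfl⟩⟩
    · refine ⟨(Ds t).c_ne (by omega) (by omega), Or.inr ⟨t, n + ((Ds t).L - 1), rfl, ?_⟩⟩
      apply (Ds t).c_congr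
      have : n + ((Ds t).L - 1) + 1 = n + (Ds t).L := by omega
      rw [this, Nat.add_mod_right]

lemma cycUnion_adj_step (t : Fin 3) (n : ℕ) :
    (cycUnion Ds).Adj ((Ds t).c n) ((Ds t).c (n + 1)) := by
  have h := cycUnion_nbhd Ds hdisj t n
  have hmem : (Ds t).c (n+1) ∈ (cycUnion Ds).neighborSet ((Ds t).c n) := by
    rw [h]; left; rfl
  exact hmem

lemma cycUnion_reach (t : Fin 3) (n : ℕ) :
    (cycUnion Ds).Reachable ((Ds t).c 0) ((Ds t).c n) := by
  induction n with
  | zero => exact Reachable.refl _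
  | succ k ih => exact ih.trans (cycUnion_adj_step Ds hdisj t k).reachable

lemma cycUnion_idx {v w : V} (h : (cycUnion Ds).Adj v w) (s : Fin 3) (nv : ℕ)
    (hv : v = (Ds s).c nv) : ∃ nw, w = (Ds s).c nw := by
  rw [cycUnion, fromRel_adj] at h
  rcases h.2 with ⟨t, k, hv', hw⟩ | ⟨t, k, hw, hv'⟩
  · obtain rfl : t = s := hdisj t s k nv (by rw [← hv', hv])
    exact ⟨k + 1, hw⟩
  · obtain rfl : t = s := hdisj t s (k+1) nv (by rw [← hv', hv])
    exact ⟨k, hw⟩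

lemma cycUnion_walk_idx {v w : V} (p : (cycUnion Ds).Walk v w) :
    ∀ s nv, v = (Ds s).c nv → ∃ nw, w = (Ds s).c nw := by
  induction p with
  | nil => exact fun s nv hv => ⟨nv, hv⟩
  | cons ha p ih =>
    intro s nv hv
    obtain ⟨nx, hx⟩ := cycUnion_idx Ds hdisj ha s nv hv
    exact ih s nx hx

/-- Main generic lemma: three disjoint covering cycles give a separating 2-factor. -/
lemma cycUnion_works (hcover : ∀ v, ∃ t n, v = (Ds t).c n)
    (A : Finset V) (a : Fin 3 → V) (hmem : ∀ t, ∃ n, a t = (Ds t).c n)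
    (hA : ∀ x, x ∈ A ↔ ∃ t, x = a t) :
    IsTwoFactor X (cycUnion Ds) ∧ SeparatesSet (cycUnion Ds) A := by
  constructor
  · constructor
    · intro v w h
      rw [cycUnion, fromRel_adj] at h
      rcases h.2 with ⟨t, k, hv, hw⟩ | ⟨t, k, hw, hv⟩
      · rw [hv, hw]; exact (Ds t).adj k
      · rw [hv, hw]; exact ((Ds t).adj k).symm
    · intro v
      obtain ⟨t, n, rfl⟩ := hcover v
      rw [cycUnion_nbhd Ds hdisj t n]
      apply Set.ncard_pair
      have h2 : n + ((Ds t).L - 1) = (n + 1) + ((Ds t).L - 2) := by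
        have := (Ds t).hL; omega
      rw [h2]
      exact (Ds t).c_ne (by have := (Ds t).hL; omega) (by have := (Ds t).hL; omega)
  · intro C
    obtain ⟨v, hv⟩ := C.exists_rep
    obtain ⟨t, n, rfl⟩ := hcover v
    obtain ⟨na, ha⟩ := hmem t
    have hmkA : (cycUnion Ds).connectedComponentMk (a t) = C := by
      rw [← hv, ha]
      exact ConnectedComponent.sound
        (((cycUnion_reach Ds hdisj t na).symm).trans (cycUnion_reach Ds hdisj t n))
    refine ⟨a t, ⟨(hA (a t)).2 ⟨t, rfl⟩, hmkA⟩, ?_⟩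
    rintro y ⟨hyA, hyC⟩
    obtain ⟨s, rfl⟩ := (hA y).1 hyA
    obtain ⟨ns, hs⟩ := hmem s
    have hreach : (cycUnion Ds).Reachable (a s) ((Ds t).c n) :=
      ConnectedComponent.exact (by rw [hyC, ← hv]; rfl)
    obtain ⟨p⟩ := hreach
    obtain ⟨nw, hnw⟩ := cycUnion_walk_idx Ds hdisj p s ns hs
    obtain rfl : s = t := hdisj s t nw n hnw.symm
    rfl

end
end Generic

section Cols
variable {m : ℕ}
def succCol (k : Fin m) : Fin m := if h : k.val + 1 < m then ⟨k.val + 1, h⟩ else ⟨0, k.pos⟩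
def colAdd (x : Fin m) (n : ℕ) : Fin m := succCol^[n] x
lemma colAdd_zero (x : Fin m) : colAdd x 0 = x := rfl
lemma colAdd_succ (x : Fin m) (n : ℕ) : colAdd x (n + 1) = succCol (colAdd x n) :=
  Function.iterate_succ_apply' _ _ _
lemma colAdd_add (x : Fin m) (a b : ℕ) : colAdd (colAdd x a) b = colAdd x (a + b) := by
  unfold colAdd; rw [Nat.add_comm a b, Function.iterate_add_apply]
lemma succCol_val (k : Fin m) : (succCol k).val = if k.val + 1 < m then k.val + 1 else 0 := by
  unfold succCol; split_ifs <;> rfl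
lemma colAdd_val (x : Fin m) : ∀ n, n ≤ m →
    (colAdd x n).val = if x.val + n < m then x.val + n else x.val + n - m := by
  intro n
  induction n with
  | zero => intro _; rw [colAdd_zero]; have := x.isLt; split_ifs <;> omega
  | succ k ih =>
    intro hk
    have hx := x.isLt
    rw [colAdd_succ, succCol_val, ih (by omega)]
    split_ifs <;> omega
lemma colAdd_m (x : Fin m) : colAdd x m = x := by
  apply Fin.ext
  rw [colAdd_val x m le_rfl]
  have := x.isLt
  split_ifs <;> omega
def cdist (x k : Fin m) : ℕ := if x.val ≤ k.val then k.val - x.val else k.val + m - x.val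
lemma cdist_lt (x k : Fin m) : cdist x k < m := by
  unfold cdist; have := x.isLt; have := k.isLt; have : 0 < m := x.pos
  split_ifs <;> omega
lemma colAdd_cdist (x k : Fin m) : colAdd x (cdist x k) = k := by
  apply Fin.ext
  rw [colAdd_val x _ (le_of_lt (cdist_lt x k))]
  unfold cdist
  have := x.isLt; have := k.isLt
  split_ifs <;> omega
lemma cdist_colAdd (x : Fin m) {n : ℕ} (h : n < m) : cdist x (colAdd x n) = n := by
  have h1 := colAdd_val x n (le_of_lt h)
  unfold cdist
  have := (colAdd x n).isLt; have := x.isLt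
  split_ifs at h1 ⊢ <;> omega
end Cols

section Adj
variable {m : ℕ} (hm : 3 ≤ m)
include hm
lemma succCol_iff (x y : Fin m) :
    y = succCol x ↔ (x.val + 1 = y.val ∨ (x.val = m - 1 ∧ y.val = 0)) := by
  unfold succCol
  have := x.isLt
  rw [Fin.ext_iff]
  split_ifs with h <;> simp only [] <;> omega
lemma pp_adj (l : ZMod 3) (u v : Fin m × ZMod 3) :
    (pseudoProd m 3 l).Adj u v ↔ u ≠ v ∧ (
      (u.1 = v.1 ∧ (v.2 = u.2 + 1 ∨ u.2 = v.2 + 1)) ∨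
      ((u.1.val + 1 = v.1.val ∨ v.1.val + 1 = u.1.val) ∧ u.2 = v.2) ∨
      (u.1.val = m - 1 ∧ v.1.val = 0 ∧ v.2 = u.2 + l) ∨
      (v.1.val = m - 1 ∧ u.1.val = 0 ∧ u.2 = v.2 + l)) := by
  show (SimpleGraph.fromRel _).Adj u v ↔ _
  rw [fromRel_adj]
  constructor
  · rintro ⟨hne, h⟩
    refine ⟨hne, ?_⟩
    rcases h with (⟨h1, h2⟩ | ⟨h1, h2⟩ | ⟨h1, h2, h3⟩) | (⟨h1, h2⟩ | ⟨h1, h2⟩ | ⟨h1, h2, h3⟩)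
    · exact Or.inl ⟨h1, Or.inl h2⟩
    · exact Or.inr (Or.inl ⟨Or.inl h1, h2⟩)
    · exact Or.inr (Or.inr (Or.inl ⟨h1, h2, h3⟩))
    · exact Or.inl ⟨h1.symm, Or.inr h2⟩
    · exact Or.inr (Or.inl ⟨Or.inr h1, h2.symm⟩)
    · exact Or.inr (Or.inr (Or.inr ⟨h1, h2, h3⟩))
  · rintro ⟨hne, h⟩
    refine ⟨hne, ?_⟩
    rcases h with ⟨h1, h2 | h2⟩ | ⟨h1 | h1, h2⟩ | ⟨h1, h2, h3⟩ | ⟨h1, h2, h3⟩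
    · exact Or.inl (Or.inl ⟨h1, h2⟩)
    · exact Or.inr (Or.inl ⟨h1.symm, h2⟩)
    · exact Or.inl (Or.inr (Or.inl ⟨h1, h2⟩))
    · exact Or.inr (Or.inr (Or.inl ⟨h1, h2.symm⟩))
    · exact Or.inl (Or.inr (Or.inr ⟨h1, h2, h3⟩))
    · exact Or.inr (Or.inr (Or.inr ⟨h1, h2, h3⟩))
omit hm in
lemma zmod3_ne_iff (a b : ZMod 3) : a ≠ b ↔ (b = a + 1 ∨ a = b + 1) := by revert a b; decide
lemma pp_adj0 (u v : Fin m × ZMod 3) :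
    (pseudoProd m 3 0).Adj u v ↔
      (u.1 = v.1 ∧ u.2 ≠ v.2) ∨ (u.2 = v.2 ∧ (v.1 = succCol u.1 ∨ u.1 = succCol v.1)) := by
  rw [pp_adj hm 0 u v]
  have h1 := succCol_iff hm u.1 v.1
  have h2 := succCol_iff hm v.1 u.1
  have hz := zmod3_ne_iff u.2 v.2
  constructor
  · rintro ⟨hne, h⟩
    rcases h with ⟨hc, hr⟩ | ⟨hc, hr⟩ | ⟨hc1, hc2, hr⟩ | ⟨hc1, hc2, hr⟩
    · exact Or.inl ⟨hc, hz.2 (by tauto)⟩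
    · exact Or.inr ⟨hr, by tauto⟩
    · rw [add_zero] at hr
      exact Or.inr ⟨hr.symm, Or.inl (h1.2 (Or.inr ⟨hc1, hc2⟩))⟩
    · rw [add_zero] at hr
      exact Or.inr ⟨hr, Or.inr (h2.2 (Or.inr ⟨hc1, hc2⟩))⟩
  · rintro (⟨hc, hr⟩ | ⟨hr, hc | hc⟩)
    · refine ⟨?_, Or.inl ⟨hc, hz.1 hr⟩⟩
      intro he; rw [he] at hr; exact hr rfl
    · have := h1.1 hc
      refine ⟨?_, ?_⟩
      · intro he
        rw [he] at this
        omega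
      · rcases this with h | ⟨ha, hb⟩
        · exact Or.inr (Or.inl ⟨Or.inl h, hr⟩)
        · exact Or.inr (Or.inr (Or.inl ⟨ha, hb, by rw [add_zero, hr]⟩))
    · have := h2.1 hc
      refine ⟨?_, ?_⟩
      · intro he
        rw [he] at this
        omega
      · rcases this with h | ⟨ha, hb⟩
        · exact Or.inr (Or.inl ⟨Or.inr h, hr⟩)
        · exact Or.inr (Or.inr (Or.inr ⟨ha, hb, by rw [add_zero, hr]⟩))
end Adj

section ZMod3
lemma zmod3_cast_inj {a b : ℕ} (ha : a < 3) (hb : b < 3) (h : (a : ZMod 3) = b) : a = b := by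
  have := ZMod.val_cast_of_lt ha
  have := ZMod.val_cast_of_lt hb
  rw [← this, ← ‹(((a:ℕ) : ZMod 3)).val = a›, h]
lemma zmod3_cast_ne {a b : ℕ} (ha : a < 3) (hb : b < 3) (h : a ≠ b) :
    (a : ZMod 3) ≠ (b : ZMod 3) := fun he => h (zmod3_cast_inj ha hb he)
lemma zmod3_cases (j : ZMod 3) : j = 0 ∨ j = 1 ∨ j = 2 := by revert j; decide
end ZMod3

section Gadgets
variable {m : ℕ}

lemma zmod3_cast_ne_zero {e : ℕ} (h1 : e = 1 ∨ e = 2) : ((e : ZMod 3)) ≠ 0 := by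
  rcases h1 with rfl | rfl <;> decide

/-- vertical adjacency -/
lemma adj_vert (hm : 3 ≤ m) {k : Fin m} {j j' : ZMod 3} (h : j ≠ j') :
    (pseudoProd m 3 0).Adj (k, j) (k, j') := by
  rw [pp_adj0 hm]; exact Or.inl ⟨rfl, h⟩

/-- horizontal adjacency -/
lemma adj_horiz (hm : 3 ≤ m) {k k' : Fin m} {j : ZMod 3} (h : k' = succCol k) :
    (pseudoProd m 3 0).Adj (k, j) (k', j) := by
  rw [pp_adj0 hm]; exact Or.inr ⟨rfl, Or.inl h⟩

lemma adj_horiz' (hm : 3 ≤ m) {k k' : Fin m} {j : ZMod 3} (h : k = succCol k') :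
    (pseudoProd m 3 0).Adj (k, j) (k', j) := by
  rw [pp_adj0 hm]; exact Or.inr ⟨rfl, Or.inr h⟩

def fin0 (hm : 3 ≤ m) : Fin m := ⟨0, by omega⟩

/-- Row cycle. -/
def rowCycD (hm : 3 ≤ m) (j : ZMod 3) : CycData (Fin m × ZMod 3) (pseudoProd m 3 0) where
  L := m
  hL := hm
  c := fun n => (colAdd (fin0 hm) n, j)
  per := fun n => by
    rw [← colAdd_add, colAdd_m]
  injw := fun a b ha hb h => by
    have hc := congrArg Prod.fst h
    simp only [] at hc
    rw [← cdist_colAdd (fin0 hm) ha, ← cdist_colAdd (fin0 hm) hb, hc]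
  adj := fun n => adj_horiz hm (colAdd_succ (fin0 hm) n)

lemma rowCycD_c (hm : 3 ≤ m) (j : ZMod 3) (n : ℕ) :
    (rowCycD hm j).c n = (colAdd (fin0 hm) n, j) := rfl

lemma rowCycD_cover (hm : 3 ≤ m) (j : ZMod 3) (k : Fin m) :
    ∃ n, (k, j) = (rowCycD hm j).c n := by
  refine ⟨cdist (fin0 hm) k, ?_⟩
  rw [rowCycD_c, colAdd_cdist]

/-- Snake window function: Hamiltonian cycle of an arc of `d` columns (all three rows). -/
def snakeW (x : Fin m) (d : ℕ) : ℕ → Fin m × ZMod 3 := fun r =>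
  if r < d then (colAdd x r, (0 : ZMod 3))
  else (colAdd x (d - 1 - (r - d) / 2), ((1 + ((r - d) / 2 + (r - d) % 2) % 2 : ℕ) : ZMod 3))

def snakeD (hm : 3 ≤ m) (x : Fin m) (d : ℕ) (hd : 1 ≤ d) (hdm : d ≤ m) :
    CycData (Fin m × ZMod 3) (pseudoProd m 3 0) where
  L := 3 * d
  hL := by omega
  c := fun n => snakeW x d (n % (3 * d))
  per := fun n => by rw [Nat.add_mod_right]
  injw := fun a b ha hb h => by
    rw [Nat.mod_eq_of_lt ha, Nat.mod_eq_of_lt hb] at h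
    unfold snakeW at h
    split_ifs at h with h1 h2 h2
    · -- both row 0
      have hc := congrArg Prod.fst h
      simp only [] at hc
      rw [← cdist_colAdd x (lt_of_lt_of_le h1 hdm), ← cdist_colAdd x (lt_of_lt_of_le h2 hdm), hc]
    · -- row 0 vs zig row: contradiction
      have hr := congrArg Prod.snd h
      simp only [] at hr
      exact absurd hr.symm (zmod3_cast_ne_zero (by omega))
    · have hr := congrArg Prod.snd h
      simp only [] at hr
      exact absurd hr (zmod3_cast_ne_zero (by omega))
    · -- both zig rows
      have hc := congrArg Prod.fst h
      have hr := congrArg Prod.snd h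
      simp only [] at hc hr
      have e1 : d - 1 - (a - d) / 2 < d := by omega
      have e2 : d - 1 - (b - d) / 2 < d := by omega
      have hcc : d - 1 - (a - d) / 2 = d - 1 - (b - d) / 2 := by
        rw [← cdist_colAdd x (lt_of_lt_of_le e1 hdm), ← cdist_colAdd x (lt_of_lt_of_le e2 hdm), hc]
      have hrr := zmod3_cast_inj (by omega) (by omega) hr
      omega
  adj := fun n => by
    have hL : 0 < 3 * d := by omega
    have hlt : n % (3 * d) < 3 * d := Nat.mod_lt _ hL
    have hmod : (n + 1) % (3 * d) = if n % (3 * d) = 3 * d - 1 then 0 else n % (3 * d) + 1 := by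
      rw [Nat.add_mod n 1, Nat.mod_eq_of_lt (a := 1) (by omega)]
      split_ifs with h
      · rw [h, Nat.sub_add_cancel (by omega), Nat.mod_self]
      · exact Nat.mod_eq_of_lt (by omega)
    set r := n % (3 * d) with hr
    rw [hmod]
    split_ifs with hend
    · -- closing edge
      rw [hend]
      unfold snakeW
      have h1 : ¬ (3 * d - 1 < d) := by omega
      have h2 : (0 : ℕ) < d := hd
      rw [if_neg h1, if_pos h2]
      have hq : 3 * d - 1 - d = 2 * d - 1 := by omega
      rw [hq]
      have hqq : (2 * d - 1) / 2 = d - 1 := by omega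
      have hcol : d - 1 - (2 * d - 1) / 2 = 0 := by omega
      rw [hcol, colAdd_zero]
      exact adj_vert hm (zmod3_cast_ne_zero (by omega))
    · -- successive edge
      unfold snakeW
      rcases Nat.lt_or_ge (r + 1) d with h1 | h1
      · rw [if_pos (by omega : r < d), if_pos h1]
        exact adj_horiz hm (colAdd_succ x r)
      · rcases Nat.lt_or_ge r d with h2 | h2
        · -- r = d - 1, turning into the zig
          have hrd : r = d - 1 := by omega
          rw [if_pos h2, if_neg (by omega)]
          have hq : r + 1 - d = 0 := by omega
          rw [hq]
          have hcol : d - 1 - (0 : ℕ) / 2 = r := by omega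
          rw [hcol]
          exact adj_vert hm (fun hh => (zmod3_cast_ne_zero (e := 1 + (0/2 + 0%2) % 2)
            (by omega)) (by rw [← hh]))
        · -- inside the zig
          rw [if_neg (by omega), if_neg (by omega)]
          set q := r - d with hqdef
          have hq1 : r + 1 - d = q + 1 := by omega
          have hql : q + 1 < 2 * d := by omega
          rw [hq1]
          rcases Nat.even_or_odd q with he | ho
          · -- vertical step
            have he2 : q % 2 = 0 := Nat.even_iff.mp he
            have hcol : d - 1 - q / 2 = d - 1 - (q + 1) / 2 := by omega
            rw [← hcol]
            apply adj_vert hm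
            apply zmod3_cast_ne (by omega) (by omega)
            omega
          · -- horizontal step (moving left)
            have ho2 : q % 2 = 1 := Nat.odd_iff.mp ho
            have hrow : (1 + (q / 2 + q % 2) % 2 : ℕ) = (1 + ((q+1) / 2 + (q+1) % 2) % 2 : ℕ) := by
              omega
            rw [← hrow]
            apply adj_horiz' hm
            rw [← colAdd_succ]
            congr 2
            omega

lemma snakeD_c (hm : 3 ≤ m) (x : Fin m) (d : ℕ) (hd : 1 ≤ d) (hdm : d ≤ m) (n : ℕ) :
    (snakeD hm x d hd hdm).c n = snakeW x d (n % (3 * d)) := rfl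

lemma snakeW_col_lt (x : Fin m) (d : ℕ) (hd : 1 ≤ d) (hdm : d ≤ m) (r : ℕ) (hr : r < 3 * d) :
    cdist x ((snakeW x d r).1) < d := by
  unfold snakeW
  split_ifs with h1
  · simp only []
    rw [cdist_colAdd x (lt_of_lt_of_le h1 hdm)]
    exact h1
  · simp only []
    rw [cdist_colAdd x (by omega : d - 1 - (r - d) / 2 < m)]
    omega

lemma snakeD_cover (hm : 3 ≤ m) (x : Fin m) (d : ℕ) (hd : 1 ≤ d) (hdm : d ≤ m)
    (k : Fin m) (j : ZMod 3) (hk : cdist x k < d) :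
    ∃ n, (k, j) = (snakeD hm x d hd hdm).c n := by
  rcases zmod3_cases j with rfl | rfl | rfl
  · refine ⟨cdist x k, ?_⟩
    rw [snakeD_c, Nat.mod_eq_of_lt (by omega)]
    unfold snakeW
    rw [if_pos hk, colAdd_cdist]
  · -- j = 1 : need (q/2 + q%2) % 2 = 0
    set t := cdist x k with ht
    set b := (d - 1 - t) % 2 with hb
    set q := 2 * (d - 1 - t) + b with hq
    refine ⟨d + q, ?_⟩
    rw [snakeD_c, Nat.mod_eq_of_lt (by omega)]
    unfold snakeW
    rw [if_neg (by omega)]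
    have h1 : d + q - d = q := by omega
    rw [h1]
    have h2 : d - 1 - q / 2 = t := by omega
    rw [h2, ht, colAdd_cdist x k]
    have h3 : (1 + (q / 2 + q % 2) % 2 : ℕ) = 1 := by omega
    rw [h3]
    norm_num
  · -- j = 2 : need (q/2 + q%2) % 2 = 1
    set t := cdist x k with ht
    set b := (d - t) % 2 with hb
    set q := 2 * (d - 1 - t) + b with hq
    refine ⟨d + q, ?_⟩
    rw [snakeD_c, Nat.mod_eq_of_lt (by omega)]
    unfold snakeW
    rw [if_neg (by omega)]
    have h1 : d + q - d = q := by omega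
    rw [h1]
    have h2 : d - 1 - q / 2 = t := by omega
    rw [h2, ht, colAdd_cdist x k]
    have h3 : (1 + (q / 2 + q % 2) % 2 : ℕ) = 2 := by omega
    rw [h3]
    norm_num

end Gadgets

/-- Block window: cycle on an arc of `d ≥ 2` columns in two rows `ra, rc`. -/
def blockW (x : Fin m) (d : ℕ) (ra rc : ZMod 3) : ℕ → Fin m × ZMod 3 := fun r =>
  if r < d then (colAdd x r, ra) else (colAdd x (2 * d - 1 - r), rc)

def blockD (hm : 3 ≤ m) (x : Fin m) (d : ℕ) (hd : 2 ≤ d) (hdm : d ≤ m)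
    (ra rc : ZMod 3) (hrne : ra ≠ rc) :
    CycData (Fin m × ZMod 3) (pseudoProd m 3 0) where
  L := 2 * d
  hL := by omega
  c := fun n => blockW x d ra rc (n % (2 * d))
  per := fun n => by rw [Nat.add_mod_right]
  injw := fun a b ha hb h => by
    rw [Nat.mod_eq_of_lt ha, Nat.mod_eq_of_lt hb] at h
    unfold blockW at h
    split_ifs at h with h1 h2 h2
    · have hc := congrArg Prod.fst h
      simp only [] at hc
      rw [← cdist_colAdd x (lt_of_lt_of_le h1 hdm), ← cdist_colAdd x (lt_of_lt_of_le h2 hdm), hc]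
    · exact absurd (congrArg Prod.snd h) hrne
    · exact absurd (congrArg Prod.snd h).symm hrne
    · have hc := congrArg Prod.fst h
      simp only [] at hc
      have e1 : 2 * d - 1 - a < d := by omega
      have e2 : 2 * d - 1 - b < d := by omega
      have := cdist_colAdd x (lt_of_lt_of_le e1 hdm)
      have := cdist_colAdd x (lt_of_lt_of_le e2 hdm)
      have : 2 * d - 1 - a = 2 * d - 1 - b := by
        rw [← cdist_colAdd x (lt_of_lt_of_le e1 hdm), ← cdist_colAdd x (lt_of_lt_of_le e2 hdm), hc]
      omega
  adj := fun n => by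
    have hL : 0 < 2 * d := by omega
    have hlt : n % (2 * d) < 2 * d := Nat.mod_lt _ hL
    have hmod : (n + 1) % (2 * d) = if n % (2 * d) = 2 * d - 1 then 0 else n % (2 * d) + 1 := by
      rw [Nat.add_mod n 1, Nat.mod_eq_of_lt (a := 1) (by omega)]
      split_ifs with h
      · rw [h, Nat.sub_add_cancel (by omega), Nat.mod_self]
      · exact Nat.mod_eq_of_lt (by omega)
    set r := n % (2 * d) with hr
    rw [hmod]
    split_ifs with hend
    · rw [hend]
      unfold blockW
      rw [if_neg (by omega), if_pos (by omega : (0:ℕ) < d)]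
      have hcol : 2 * d - 1 - (2 * d - 1) = 0 := by omega
      rw [hcol]
      exact adj_vert hm (Ne.symm hrne)
    · unfold blockW
      rcases Nat.lt_or_ge (r + 1) d with h1 | h1
      · rw [if_pos (by omega : r < d), if_pos h1]
        exact adj_horiz hm (colAdd_succ x r)
      · rcases Nat.lt_or_ge r d with h2 | h2
        · have hrd : r = d - 1 := by omega
          rw [if_pos h2, if_neg (by omega)]
          have hcol : 2 * d - 1 - (r + 1) = r := by omega
          rw [hcol]
          exact adj_vert hm hrne
        · rw [if_neg (by omega), if_neg (by omega)]
          apply adj_horiz' hm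
          rw [← colAdd_succ]
          congr 2
          omega

lemma blockD_c (hm : 3 ≤ m) (x : Fin m) (d : ℕ) (hd : 2 ≤ d) (hdm : d ≤ m)
    (ra rc : ZMod 3) (hrne : ra ≠ rc) (n : ℕ) :
    (blockD hm x d hd hdm ra rc hrne).c n = blockW x d ra rc (n % (2 * d)) := rfl

lemma blockD_cover (hm : 3 ≤ m) (x : Fin m) (d : ℕ) (hd : 2 ≤ d) (hdm : d ≤ m)
    (ra rc : ZMod 3) (hrne : ra ≠ rc) (k : Fin m) (j : ZMod 3) (hk : cdist x k < d)
    (hj : j = ra ∨ j = rc) :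
    ∃ n, (k, j) = (blockD hm x d hd hdm ra rc hrne).c n := by
  rcases hj with rfl | rfl
  · refine ⟨cdist x k, ?_⟩
    rw [blockD_c, Nat.mod_eq_of_lt (by omega)]
    unfold blockW
    rw [if_pos hk, colAdd_cdist]
  · refine ⟨2 * d - 1 - cdist x k, ?_⟩
    rw [blockD_c, Nat.mod_eq_of_lt (by omega)]
    unfold blockW
    rw [if_neg (by omega)]
    have hcol : 2 * d - 1 - (2 * d - 1 - cdist x k) = cdist x k := by omega
    rw [hcol, colAdd_cdist]

lemma blockW_mem (x : Fin m) (d : ℕ) (ra rc : ZMod 3) (r : ℕ) (hd : 1 ≤ d) (hdm : d ≤ m) :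
    cdist x ((blockW x d ra rc r).1) < d ∧
      ((blockW x d ra rc r).2 = ra ∨ (blockW x d ra rc r).2 = rc) := by
  unfold blockW
  split_ifs with h1
  · refine ⟨?_, Or.inl rfl⟩
    show cdist x (colAdd x r) < d
    rw [cdist_colAdd x (lt_of_lt_of_le h1 hdm)]
    exact h1
  · refine ⟨?_, Or.inr rfl⟩
    show cdist x (colAdd x (2 * d - 1 - r)) < d
    rcases Nat.lt_or_ge (2 * d - 1 - r) d with h | h
    · rw [cdist_colAdd x (lt_of_lt_of_le h hdm)]
      exact h
    · omega

lemma snakeW_mem (x : Fin m) (d : ℕ) (r : ℕ) (hd : 1 ≤ d) (hdm : d ≤ m) :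
    cdist x ((snakeW x d r).1) < d := by
  unfold snakeW
  split_ifs with h1
  · simp only []
    rw [cdist_colAdd x (lt_of_lt_of_le h1 hdm)]
    exact h1
  · simp only []
    rw [cdist_colAdd x (by omega : d - 1 - (r - d) / 2 < m)]
    omega

section Assemblies
variable {m : ℕ}

lemma fin3_cases (t : Fin 3) : t = 0 ∨ t = 1 ∨ t = 2 := by revert t; decide

lemma zmod3_covers (a b c j : ZMod 3) (hab : a ≠ b) (hac : a ≠ c) (hbc : b ≠ c) :
    j = a ∨ j = b ∨ j = c := by revert a b c j; decide

lemma cdist_self (x : Fin m) : cdist x x = 0 := by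
  unfold cdist; split_ifs <;> omega

lemma cdist_colAdd_rel (x k : Fin m) (s : ℕ) (hs : s < m) :
    cdist (colAdd x s) k = if s ≤ cdist x k then cdist x k - s else cdist x k + m - s := by
  have h1 := colAdd_val x s (le_of_lt hs)
  unfold cdist at *
  have := x.isLt; have := k.isLt; have hk : 0 < m := x.pos
  split_ifs at h1 ⊢ <;> omega

lemma case_rows (hm : 3 ≤ m) (A : Finset (Fin m × ZMod 3)) (u v w : Fin m × ZMod 3)
    (hA : ∀ x, x ∈ A ↔ x = u ∨ x = v ∨ x = w)
    (h1 : u.2 ≠ v.2) (h2 : u.2 ≠ w.2) (h3 : v.2 ≠ w.2) :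
    ∃ H, IsTwoFactor (pseudoProd m 3 0) H ∧ SeparatesSet H A := by
  set Ds : Fin 3 → CycData (Fin m × ZMod 3) (pseudoProd m 3 0) :=
    ![rowCycD hm u.2, rowCycD hm v.2, rowCycD hm w.2] with hDs
  have hc0 : ∀ n, (Ds 0).c n = (colAdd (fin0 hm) n, u.2) := fun n => rfl
  have hc1 : ∀ n, (Ds 1).c n = (colAdd (fin0 hm) n, v.2) := fun n => rfl
  have hc2 : ∀ n, (Ds 2).c n = (colAdd (fin0 hm) n, w.2) := fun n => rfl
  have hrow : ∀ t n, ((Ds t).c n).2 = ![u.2, v.2, w.2] t := by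
    intro t n
    rcases fin3_cases t with rfl | rfl | rfl
    · rw [hc0]; rfl
    · rw [hc1]; rfl
    · rw [hc2]; rfl
  have hdisj : ∀ s t a b, (Ds s).c a = (Ds t).c b → s = t := by
    intro s t a b h
    have h' := congrArg Prod.snd h
    rw [hrow s a, hrow t b] at h'
    rcases fin3_cases s with rfl | rfl | rfl <;> rcases fin3_cases t with rfl | rfl | rfl <;>
      first
        | rfl
        | (exfalso; revert h'; simp only [Matrix.cons_val_zero, Matrix.cons_val_one,
            Matrix.head_cons, Matrix.cons_val_two, Matrix.tail_cons]; tauto)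
  refine ⟨cycUnion Ds, cycUnion_works Ds hdisj ?_ A ![u, v, w] ?_ ?_⟩
  · rintro ⟨k, j⟩
    rcases zmod3_covers u.2 v.2 w.2 j h1 h2 h3 with rfl | rfl | rfl
    · obtain ⟨n, hn⟩ := rowCycD_cover hm u.2 k
      exact ⟨0, n, hn⟩
    · obtain ⟨n, hn⟩ := rowCycD_cover hm v.2 k
      exact ⟨1, n, hn⟩
    · obtain ⟨n, hn⟩ := rowCycD_cover hm w.2 k
      exact ⟨2, n, hn⟩
  · intro t
    rcases fin3_cases t with rfl | rfl | rfl
    · obtain ⟨n, hn⟩ := rowCycD_cover hm u.2 u.1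
      exact ⟨n, by rw [show (![u,v,w] 0) = u from rfl, ← Prod.mk.eta (p := u)]; exact hn⟩
    · obtain ⟨n, hn⟩ := rowCycD_cover hm v.2 v.1
      exact ⟨n, by rw [show (![u,v,w] 1) = v from rfl, ← Prod.mk.eta (p := v)]; exact hn⟩
    · obtain ⟨n, hn⟩ := rowCycD_cover hm w.2 w.1
      exact ⟨n, by rw [show (![u,v,w] 2) = w from rfl, ← Prod.mk.eta (p := w)]; exact hn⟩
  · intro x
    rw [hA x]
    constructor
    · rintro (rfl | rfl | rfl)
      exacts [⟨0, rfl⟩, ⟨1, rfl⟩, ⟨2, rfl⟩]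
    · rintro ⟨t, rfl⟩
      rcases fin3_cases t with rfl | rfl | rfl
      · exact Or.inl rfl
      · exact Or.inr (Or.inl rfl)
      · exact Or.inr (Or.inr rfl)

end Assemblies

section CaseCols
variable {m : ℕ}

lemma cdist_eq_zero_iff (x k : Fin m) : cdist x k = 0 ↔ k = x := by
  constructor
  · intro h
    have := colAdd_cdist x k
    rw [h, colAdd_zero] at this
    exact this.symm
  · rintro rfl; exact cdist_self _

lemma case_cols_core (hm : 3 ≤ m) (A : Finset (Fin m × ZMod 3)) (u v w : Fin m × ZMod 3)
    (hA : ∀ x, x ∈ A ↔ x = u ∨ x = v ∨ x = w)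
    (huv : u.1 ≠ v.1) (huw : u.1 ≠ w.1) (hvw : v.1 ≠ w.1)
    (hord : cdist u.1 v.1 < cdist u.1 w.1) :
    ∃ H, IsTwoFactor (pseudoProd m 3 0) H ∧ SeparatesSet H A := by
  set t2 := cdist u.1 v.1 with ht2
  set t3 := cdist u.1 w.1 with ht3
  have ht2m : t2 < m := cdist_lt _ _
  have ht3m : t3 < m := cdist_lt _ _
  have ht2pos : 0 < t2 := by
    rcases Nat.eq_zero_or_pos t2 with h | h
    · rw [ht2] at h
      exact absurd ((cdist_eq_zero_iff u.1 v.1).1 h) (fun he => huv he.symm)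
    · exact h
  have hx2 : colAdd u.1 t2 = v.1 := colAdd_cdist u.1 v.1
  have hx3 : colAdd u.1 t3 = w.1 := colAdd_cdist u.1 w.1
  -- relations between distances
  have hrel2 : ∀ k : Fin m, cdist v.1 k = if t2 ≤ cdist u.1 k then cdist u.1 k - t2
      else cdist u.1 k + m - t2 := by
    intro k
    rw [← hx2]
    exact cdist_colAdd_rel u.1 k t2 ht2m
  have hrel3 : ∀ k : Fin m, cdist w.1 k = if t3 ≤ cdist u.1 k then cdist u.1 k - t3
      else cdist u.1 k + m - t3 := by
    intro k
    rw [← hx3]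
    exact cdist_colAdd_rel u.1 k t3 ht3m
  set d1 := t2 with hd1
  set d2 := t3 - t2 with hd2
  set d3 := m - t3 with hd3
  set Ds : Fin 3 → CycData (Fin m × ZMod 3) (pseudoProd m 3 0) :=
    ![snakeD hm u.1 d1 (by omega) (by omega),
      snakeD hm v.1 d2 (by omega) (by omega),
      snakeD hm w.1 d3 (by omega) (by omega)] with hDs
  -- column windows
  have hwin : ∀ t n, ∃ k : Fin m, ((Ds t).c n).1 = k ∧
      (t = 0 → cdist u.1 k < d1) ∧ (t = 1 → cdist v.1 k < d2) ∧ (t = 2 → cdist w.1 k < d3) := by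
    intro t n
    rcases fin3_cases t with rfl | rfl | rfl
    · exact ⟨_, rfl, fun _ => snakeW_mem u.1 d1 _ (by omega) (by omega),
        fun h => by exact absurd h (by decide), fun h => by exact absurd h (by decide)⟩
    · exact ⟨_, rfl, fun h => by exact absurd h (by decide),
        fun _ => snakeW_mem v.1 d2 _ (by omega) (by omega), fun h => by exact absurd h (by decide)⟩
    · exact ⟨_, rfl, fun h => by exact absurd h (by decide), fun h => by exact absurd h (by decide),
        fun _ => snakeW_mem w.1 d3 _ (by omega) (by omega)⟩
  have hdisj : ∀ s t a b, (Ds s).c a = (Ds t).c b → s = t := by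
    intro s t a b h
    have hcol := congrArg Prod.fst h
    obtain ⟨k, hk, p0, p1, p2⟩ := hwin s a
    obtain ⟨k', hk', q0, q1, q2⟩ := hwin t b
    rw [hk, hk'] at hcol
    subst hcol
    have hr2 := hrel2 k
    have hr3 := hrel3 k
    have hmm : cdist u.1 k < m := cdist_lt _ _
    have n01 : ¬(cdist u.1 k < d1 ∧ cdist v.1 k < d2) := by split_ifs at hr2 <;> omega
    have n02 : ¬(cdist u.1 k < d1 ∧ cdist w.1 k < d3) := by split_ifs at hr3 <;> omega
    have n12 : ¬(cdist v.1 k < d2 ∧ cdist w.1 k < d3) := by split_ifs at hr2 hr3 <;> omega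
    rcases fin3_cases s with rfl | rfl | rfl <;> rcases fin3_cases t with rfl | rfl | rfl
    · rfl
    · exact absurd ⟨p0 rfl, q1 rfl⟩ n01
    · exact absurd ⟨p0 rfl, q2 rfl⟩ n02
    · exact absurd ⟨q0 rfl, p1 rfl⟩ n01
    · rfl
    · exact absurd ⟨p1 rfl, q2 rfl⟩ n12
    · exact absurd ⟨q0 rfl, p2 rfl⟩ n02
    · exact absurd ⟨q1 rfl, p2 rfl⟩ n12
    · rfl
  refine ⟨cycUnion Ds, cycUnion_works Ds hdisj ?_ A ![u, v, w] ?_ ?_⟩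
  · rintro ⟨k, j⟩
    have hr2 := hrel2 k
    have hr3 := hrel3 k
    have hmm : cdist u.1 k < m := cdist_lt _ _
    rcases Nat.lt_or_ge (cdist u.1 k) d1 with h | h
    · obtain ⟨n, hn⟩ := snakeD_cover hm u.1 d1 (by omega) (by omega) k j h
      exact ⟨0, n, hn⟩
    · rcases Nat.lt_or_ge (cdist u.1 k) t3 with h' | h'
      · obtain ⟨n, hn⟩ := snakeD_cover hm v.1 d2 (by omega) (by omega) k j
          (by split_ifs at hr2 <;> omega)
        exact ⟨1, n, hn⟩
      · obtain ⟨n, hn⟩ := snakeD_cover hm w.1 d3 (by omega) (by omega) k j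
          (by split_ifs at hr3 <;> omega)
        exact ⟨2, n, hn⟩
  · intro t
    rcases fin3_cases t with rfl | rfl | rfl
    · obtain ⟨n, hn⟩ := snakeD_cover hm u.1 d1 (by omega) (by omega) u.1 u.2
        (by rw [cdist_self]; omega)
      exact ⟨n, by rw [show (![u,v,w] 0) = u from rfl, ← Prod.mk.eta (p := u)]; exact hn⟩
    · obtain ⟨n, hn⟩ := snakeD_cover hm v.1 d2 (by omega) (by omega) v.1 v.2
        (by rw [cdist_self]; omega)
      exact ⟨n, by rw [show (![u,v,w] 1) = v from rfl, ← Prod.mk.eta (p := v)]; exact hn⟩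
    · obtain ⟨n, hn⟩ := snakeD_cover hm w.1 d3 (by omega) (by omega) w.1 w.2
        (by rw [cdist_self]; omega)
      exact ⟨n, by rw [show (![u,v,w] 2) = w from rfl, ← Prod.mk.eta (p := w)]; exact hn⟩
  · intro x
    rw [hA x]
    constructor
    · rintro (rfl | rfl | rfl)
      exacts [⟨0, rfl⟩, ⟨1, rfl⟩, ⟨2, rfl⟩]
    · rintro ⟨t, rfl⟩
      rcases fin3_cases t with rfl | rfl | rfl
      · exact Or.inl rfl
      · exact Or.inr (Or.inl rfl)
      · exact Or.inr (Or.inr rfl)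

lemma case_cols (hm : 3 ≤ m) (A : Finset (Fin m × ZMod 3)) (u v w : Fin m × ZMod 3)
    (hA : ∀ x, x ∈ A ↔ x = u ∨ x = v ∨ x = w)
    (huv : u.1 ≠ v.1) (huw : u.1 ≠ w.1) (hvw : v.1 ≠ w.1) :
    ∃ H, IsTwoFactor (pseudoProd m 3 0) H ∧ SeparatesSet H A := by
  have hne : cdist u.1 v.1 ≠ cdist u.1 w.1 := by
    intro h
    have h1 := colAdd_cdist u.1 v.1
    have h2 := colAdd_cdist u.1 w.1
    rw [h] at h1
    exact hvw (h1.symm.trans h2)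
  rcases Nat.lt_or_ge (cdist u.1 v.1) (cdist u.1 w.1) with h | h
  · exact case_cols_core hm A u v w hA huv huw hvw h
  · exact case_cols_core hm A u w v (fun x => (hA x).trans (by tauto)) huw huv
      (Ne.symm hvw) (by omega)

end CaseCols

section CaseIII
variable {m : ℕ}

lemma zmod3_third (a b : ZMod 3) (hab : a ≠ b) :
    a ≠ -(a+b) ∧ b ≠ -(a+b) ∧ (∀ j : ZMod 3, j = b ∨ j = a ∨ j = -(a+b)) := by
  revert a b; decide

lemma case_shared_col (hm4 : 4 ≤ m) (A : Finset (Fin m × ZMod 3)) (u v w : Fin m × ZMod 3)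
    (hA : ∀ x, x ∈ A ↔ x = u ∨ x = v ∨ x = w)
    (hcol : u.1 = v.1) (hrow : w.2 = u.2) (hruv : u.2 ≠ v.2) (hcuw : u.1 ≠ w.1) :
    ∃ H, IsTwoFactor (pseudoProd m 3 0) H ∧ SeparatesSet H A := by
  have hm : 3 ≤ m := by omega
  set a := u.2 with ha
  set b := v.2 with hb
  set rc := -(a + b) with hrc
  obtain ⟨hne1, hne2, hcov3⟩ := zmod3_third a b hruv
  set i := u.1 with hi
  set i' := w.1 with hi'
  set x : Fin m := if i = colAdd i' 1 then colAdd i' (m - 1) else i' with hx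
  -- basic facts about x
  have hxi' : cdist x i' < 2 := by
    rw [hx]
    split_ifs with h
    · have hthis : colAdd (colAdd i' (m-1)) 1 = i' := by
        rw [colAdd_add, (by omega : m - 1 + 1 = m), colAdd_m]
      have e : cdist (colAdd i' (m-1)) (colAdd (colAdd i' (m-1)) 1) = 1 :=
        cdist_colAdd _ (by omega)
      rw [hthis] at e
      omega
    · rw [cdist_self]; omega
  have hxi : 2 ≤ cdist x i ∧ cdist x i < m := by
    refine ⟨?_, cdist_lt _ _⟩
    have h0 : i ≠ x := by
      rw [hx]
      split_ifs with h
      · intro he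
        rw [h] at he
        have e1 : cdist i' (colAdd i' 1) = 1 := cdist_colAdd _ (by omega)
        have e2 : cdist i' (colAdd i' (m-1)) = m - 1 := cdist_colAdd _ (by omega)
        rw [he] at e1
        omega
      · exact hcuw
    have h1 : i ≠ colAdd x 1 := by
      rw [hx]
      split_ifs with h
      · rw [colAdd_add, (by omega : m - 1 + 1 = m), colAdd_m]
        exact hcuw
      · intro he
        exact h (by rw [he])
    rcases Nat.lt_or_ge (cdist x i) 2 with hlt | hge
    · exfalso
      interval_cases h : (cdist x i)
      · exact h0 (by rw [← colAdd_cdist x i, h, colAdd_zero])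
      · exact h1 (by rw [← colAdd_cdist x i, h])
    · exact hge
  have hrel : ∀ k : Fin m, cdist (colAdd x 2) k =
      if 2 ≤ cdist x k then cdist x k - 2 else cdist x k + m - 2 := fun k =>
    cdist_colAdd_rel x k 2 (by omega)
  set Ds : Fin 3 → CycData (Fin m × ZMod 3) (pseudoProd m 3 0) :=
    ![blockD hm x 2 (le_refl 2) (by omega) a rc hne1,
      blockD hm (colAdd x 2) (m - 2) (by omega) (by omega) a rc hne1,
      rowCycD hm b] with hDs
  have hwin : ∀ t n, ∃ k : Fin m, ∃ j : ZMod 3, (Ds t).c n = (k, j) ∧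
      (t = 0 → cdist x k < 2 ∧ (j = a ∨ j = rc)) ∧
      (t = 1 → cdist (colAdd x 2) k < m - 2 ∧ (j = a ∨ j = rc)) ∧
      (t = 2 → j = b) := by
    intro t n
    rcases fin3_cases t with rfl | rfl | rfl
    · obtain ⟨h1, h2⟩ := blockW_mem x 2 a rc (n % (2*2)) (by omega) (by omega)
      exact ⟨_, _, rfl, fun _ => ⟨h1, h2⟩, fun h => absurd h (by decide),
        fun h => absurd h (by decide)⟩
    · obtain ⟨h1, h2⟩ := blockW_mem (colAdd x 2) (m-2) a rc (n % (2*(m-2))) (by omega) (by omega)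
      exact ⟨_, _, rfl, fun h => absurd h (by decide), fun _ => ⟨h1, h2⟩,
        fun h => absurd h (by decide)⟩
    · exact ⟨_, _, rfl, fun h => absurd h (by decide), fun h => absurd h (by decide),
        fun _ => rfl⟩
  have hdisj : ∀ s t c d, (Ds s).c c = (Ds t).c d → s = t := by
    intro s t c d h
    obtain ⟨k, j, hk, p0, p1, p2⟩ := hwin s c
    obtain ⟨k', j', hk', q0, q1, q2⟩ := hwin t d
    rw [hk, hk'] at h
    obtain ⟨rfl, rfl⟩ : k = k' ∧ j = j' := ⟨congrArg Prod.fst h, congrArg Prod.snd h⟩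
    have hrelk := hrel k
    have hmm : cdist x k < m := cdist_lt _ _
    have n01 : ¬(cdist x k < 2 ∧ cdist (colAdd x 2) k < m - 2) := by
      split_ifs at hrelk <;> omega
    have njb : ∀ j : ZMod 3, (j = a ∨ j = rc) → ¬(j = b) := by
      intro j hj hjb
      rcases hj with h | h
      · exact hruv (h.symm.trans hjb)
      · exact hne2 (hjb.symm.trans h)
    rcases fin3_cases s with rfl | rfl | rfl <;> rcases fin3_cases t with rfl | rfl | rfl
    · rfl
    · exact absurd ⟨(p0 rfl).1, (q1 rfl).1⟩ n01
    · exact absurd (q2 rfl) (njb _ (p0 rfl).2)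
    · exact absurd ⟨(q0 rfl).1, (p1 rfl).1⟩ n01
    · rfl
    · exact absurd (q2 rfl) (njb _ (p1 rfl).2)
    · exact absurd (p2 rfl) (njb _ (q0 rfl).2)
    · exact absurd (p2 rfl) (njb _ (q1 rfl).2)
    · rfl
  refine ⟨cycUnion Ds, cycUnion_works Ds hdisj ?_ A ![w, u, v] ?_ ?_⟩
  · rintro ⟨k, j⟩
    have hrelk := hrel k
    have hmm : cdist x k < m := cdist_lt _ _
    rcases hcov3 j with rfl | hj | hj
    · obtain ⟨n, hn⟩ := rowCycD_cover hm b k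
      exact ⟨2, n, hn⟩
    · rcases Nat.lt_or_ge (cdist x k) 2 with h | h
      · obtain ⟨n, hn⟩ := blockD_cover hm x 2 (le_refl 2) (by omega) a rc hne1 k j h (Or.inl hj)
        exact ⟨0, n, hn⟩
      · obtain ⟨n, hn⟩ := blockD_cover hm (colAdd x 2) (m-2) (by omega) (by omega) a rc hne1 k j
          (by split_ifs at hrelk <;> omega) (Or.inl hj)
        exact ⟨1, n, hn⟩
    · rcases Nat.lt_or_ge (cdist x k) 2 with h | h
      · obtain ⟨n, hn⟩ := blockD_cover hm x 2 (le_refl 2) (by omega) a rc hne1 k j h (Or.inr hj)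
        exact ⟨0, n, hn⟩
      · obtain ⟨n, hn⟩ := blockD_cover hm (colAdd x 2) (m-2) (by omega) (by omega) a rc hne1 k j
          (by split_ifs at hrelk <;> omega) (Or.inr hj)
        exact ⟨1, n, hn⟩
  · intro t
    rcases fin3_cases t with rfl | rfl | rfl
    · obtain ⟨n, hn⟩ := blockD_cover hm x 2 (le_refl 2) (by omega) a rc hne1 w.1 w.2
        (by rw [← hi']; exact hxi') (Or.inl hrow)
      exact ⟨n, by rw [show (![w,u,v] 0) = w from rfl, ← Prod.mk.eta (p := w)]; exact hn⟩
    · have hrelk := hrel i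
      obtain ⟨n, hn⟩ := blockD_cover hm (colAdd x 2) (m-2) (by omega) (by omega) a rc hne1 u.1 u.2
        (by rw [← hi]; split_ifs at hrelk <;> omega) (Or.inl rfl)
      exact ⟨n, by rw [show (![w,u,v] 1) = u from rfl, ← Prod.mk.eta (p := u)]; exact hn⟩
    · obtain ⟨n, hn⟩ := rowCycD_cover hm b v.1
      exact ⟨n, by rw [show (![w,u,v] 2) = v from rfl, ← Prod.mk.eta (p := v)]; exact hn⟩
  · intro y
    rw [hA y]
    constructor
    · rintro (rfl | rfl | rfl)
      exacts [⟨1, rfl⟩, ⟨2, rfl⟩, ⟨0, rfl⟩]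
    · rintro ⟨t, rfl⟩
      rcases fin3_cases t with rfl | rfl | rfl
      · exact Or.inr (Or.inr rfl)
      · exact Or.inl rfl
      · exact Or.inr (Or.inl rfl)

end CaseIII

section Backward
variable {m : ℕ}

lemma case_shared (hm4 : 4 ≤ m) (A : Finset (Fin m × ZMod 3)) (p q r : Fin m × ZMod 3)
    (hA : ∀ x, x ∈ A ↔ x = p ∨ x = q ∨ x = r) (hpq1 : p.1 = q.1)
    (hpq : p ≠ q) (hpr : p ≠ r) (hqr : q ≠ r) :
    ∃ H, IsTwoFactor (pseudoProd m 3 0) H ∧ SeparatesSet H A := by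
  have hm : 3 ≤ m := by omega
  have hpq2 : p.2 ≠ q.2 := fun h => hpq (Prod.ext hpq1 h)
  by_cases hr2 : r.2 = p.2
  · exact case_shared_col hm4 A p q r hA hpq1 hr2 hpq2
      (fun h => hpr (Prod.ext h hr2.symm))
  · by_cases hr2' : r.2 = q.2
    · exact case_shared_col hm4 A q p r (fun x => (hA x).trans (by tauto)) hpq1.symm hr2'
        (Ne.symm hpq2) (fun h => hqr (Prod.ext h hr2'.symm))
    · exact case_rows hm A p q r hA hpq2 (fun h => hr2 h.symm) (fun h => hr2' h.symm)

lemma backward (hm4 : 4 ≤ m) : SpanningCyclable (pseudoProd m 3 0) 3 := by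
  intro A hcard
  obtain ⟨u, v, w, huv, huw, hvw, rfl⟩ := Finset.card_eq_three.mp hcard
  have hm : 3 ≤ m := by omega
  have hA : ∀ x, x ∈ ({u, v, w} : Finset (Fin m × ZMod 3)) ↔ x = u ∨ x = v ∨ x = w := by
    intro x
    simp [Finset.mem_insert, Finset.mem_singleton]
  by_cases huv1 : u.1 = v.1
  · exact case_shared hm4 _ u v w hA huv1 huv huw hvw
  · by_cases huw1 : u.1 = w.1
    · exact case_shared hm4 _ u w v (fun x => (hA x).trans (by tauto)) huw1 huw huv
        (Ne.symm hvw)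
    · by_cases hvw1 : v.1 = w.1
      · exact case_shared hm4 _ v w u (fun x => (hA x).trans (by tauto)) hvw1 hvw
          (Ne.symm huv) (Ne.symm huw)
      · exact case_cols hm _ u v w hA huv1 huw1 hvw1

end Backward

section Impossible
variable {V : Type*}

lemma force_two {H X : SimpleGraph V} (hle : H ≤ X) {v p q a b : V}
    (hdeg : (H.neighborSet v).ncard = 2)
    (hX : X.neighborSet v ⊆ {a, b, p, q})
    (hnota : a ∉ H.neighborSet v) (hnotb : b ∉ H.neighborSet v) (hpq : p ≠ q) :
    H.neighborSet v = {p, q} := by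
  apply Set.eq_of_subset_of_ncard_le
  · intro w hw
    have hwX : w ∈ X.neighborSet v := hle hw
    rcases hX hwX with rfl | rfl | h
    · exact absurd hw hnota
    · exact absurd hw hnotb
    · exact h
  · rw [Set.ncard_pair hpq, hdeg]
  · exact Set.toFinite _

variable {m : ℕ}

lemma z_row1 : ∀ x y : ZMod 3, x = y + 1 → y = x + 2 := by decide
lemma z_row2 : ∀ x y l : ZMod 3, x = y + l → y = x - l := by decide
lemma z_self1 : ∀ r : ZMod 3, r ≠ r + 1 := by decide
lemma z_self2 : ∀ r : ZMod 3, r ≠ r + 2 := by decide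
lemma z_subl : ∀ r l : ZMod 3, r - l = r → l = 0 := by decide

lemma nbrs_col0 (hm : 3 ≤ m) (l : ZMod 3) (r : ZMod 3) :
    (pseudoProd m 3 l).neighborSet ((⟨0, by omega⟩ : Fin m), r) ⊆
      {((⟨0, by omega⟩ : Fin m), r + 1), ((⟨0, by omega⟩ : Fin m), r + 2),
       ((⟨1, by omega⟩ : Fin m), r), ((⟨m - 1, by omega⟩ : Fin m), r - l)} := by
  intro w hw
  rw [mem_neighborSet, pp_adj hm] at hw
  obtain ⟨hne, hcl⟩ := hw
  simp only [Set.mem_insert_iff, Set.mem_singleton_iff]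
  have hw1 := w.1.isLt
  rcases hcl with ⟨hc, hr | hr⟩ | ⟨hc | hc, hr⟩ | ⟨hc1, hc2, hr⟩ | ⟨hc1, hc2, hr⟩
  · left
    rw [← Prod.mk.eta (p := w), ← hc, hr]
  · right; left
    rw [← Prod.mk.eta (p := w), ← hc, z_row1 _ _ hr]
  · right; right; left
    rw [← Prod.mk.eta (p := w), ← hr]
    have : w.1 = (⟨1, by omega⟩ : Fin m) := Fin.ext (by simpa using hc.symm)
    rw [this]
  · exact absurd (show w.1.val + 1 = 0 from hc) (by omega)
  · exact absurd (show (0 : ℕ) = m - 1 from hc1) (by omega)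
  · right; right; right
    rw [← Prod.mk.eta (p := w), z_row2 _ _ _ hr]
    have : w.1 = (⟨m - 1, by omega⟩ : Fin m) := Fin.ext (by simpa using hc1)
    rw [this]

lemma nbrs_mid (hm : 3 ≤ m) (l : ZMod 3) (k : ℕ) (hk1 : 1 ≤ k) (hk2 : k ≤ m - 2) (r : ZMod 3) :
    (pseudoProd m 3 l).neighborSet ((⟨k, by omega⟩ : Fin m), r) ⊆
      {((⟨k, by omega⟩ : Fin m), r + 1), ((⟨k, by omega⟩ : Fin m), r + 2),
       ((⟨k - 1, by omega⟩ : Fin m), r), ((⟨k + 1, by omega⟩ : Fin m), r)} := by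
  intro w hw
  rw [mem_neighborSet, pp_adj hm] at hw
  obtain ⟨hne, hcl⟩ := hw
  simp only [Set.mem_insert_iff, Set.mem_singleton_iff]
  have hw1 := w.1.isLt
  rcases hcl with ⟨hc, hr | hr⟩ | ⟨hc | hc, hr⟩ | ⟨hc1, hc2, hr⟩ | ⟨hc1, hc2, hr⟩
  · left
    rw [← Prod.mk.eta (p := w), ← hc, hr]
  · right; left
    rw [← Prod.mk.eta (p := w), ← hc, z_row1 _ _ hr]
  · right; right; right
    rw [← Prod.mk.eta (p := w), ← hr]
    have : w.1 = (⟨k + 1, by omega⟩ : Fin m) := Fin.ext (by simpa using hc.symm)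
    rw [this]
  · right; right; left
    rw [← Prod.mk.eta (p := w), ← hr]
    have : w.1 = (⟨k - 1, by omega⟩ : Fin m) := Fin.ext (by simp at hc ⊢; omega)
    rw [this]
  · exact absurd (show k = m - 1 from hc1) (by omega)
  · exact absurd (show k = 0 from hc2) (by omega)

lemma noSC_lne (hm : 3 ≤ m) (l : ZMod 3) (hl : l ≠ 0) :
    ¬ SpanningCyclable (pseudoProd m 3 l) 3 := by
  intro hSC
  set X := pseudoProd m 3 l with hX
  set v0 : ZMod 3 → Fin m × ZMod 3 := fun r => ((⟨0, by omega⟩ : Fin m), r) with hv0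
  have hv0inj : ∀ r r', v0 r = v0 r' → r = r' := fun r r' h => congrArg Prod.snd h
  set A : Finset (Fin m × ZMod 3) := {v0 0, v0 1, v0 2} with hA
  have hcard : A.card = 3 := by
    rw [hA]
    rw [Finset.card_insert_of_notMem, Finset.card_insert_of_notMem, Finset.card_singleton]
    · simp only [Finset.mem_singleton]
      exact fun h => absurd (hv0inj _ _ h) (by decide)
    · simp only [Finset.mem_insert, Finset.mem_singleton]
      rintro (h | h) <;> exact absurd (hv0inj _ _ h) (by decide)
  obtain ⟨H, ⟨hle, hdeg⟩, hsep⟩ := hSC A hcard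
  have hmemA : ∀ r : ZMod 3, v0 r ∈ A := by
    intro r
    rcases zmod3_cases r with rfl | rfl | rfl <;>
      simp [hA, Finset.mem_insert, Finset.mem_singleton]
  set K : ZMod 3 → H.ConnectedComponent := fun r => H.connectedComponentMk (v0 r) with hK
  have hKdist : ∀ r r' : ZMod 3, K r = K r' → r = r' := by
    intro r r' h
    obtain ⟨a, _, hu⟩ := hsep (K r')
    have e1 := hu (v0 r) ⟨hmemA r, h⟩
    have e2 := hu (v0 r') ⟨hmemA r', rfl⟩
    exact hv0inj _ _ (e1.trans e2.symm)
  -- no vertical edges at a column all of whose vertices have distinct known components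
  have hnovert : ∀ (p p' : Fin m × ZMod 3), p.2 ≠ p'.2 →
      H.connectedComponentMk p = K p.2 → H.connectedComponentMk p' = K p'.2 →
      p' ∉ H.neighborSet p := by
    intro p p' hne hp hp' hmem
    rw [mem_neighborSet] at hmem
    have : H.connectedComponentMk p = H.connectedComponentMk p' :=
      ConnectedComponent.sound hmem.reachable
    rw [hp, hp'] at this
    exact hne (hKdist _ _ this)
  -- step 1 : neighbours of column-0 vertices
  have hstep1 : ∀ r : ZMod 3, H.neighborSet (v0 r) =
      {((⟨1, by omega⟩ : Fin m), r), ((⟨m - 1, by omega⟩ : Fin m), r - l)} := by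
    intro r
    apply force_two hle (hdeg _) (nbrs_col0 hm l r)
    · exact hnovert (v0 r) (v0 (r + 1)) (z_self1 r) rfl rfl
    · exact hnovert (v0 r) (v0 (r + 2)) (z_self2 r) rfl rfl
    · intro h
      have h1 : (1 : ℕ) = m - 1 := congrArg (fun p => (p.1 : Fin m).val) h
      omega
  have hadj01 : ∀ r, H.Adj (v0 r) ((⟨1, by omega⟩ : Fin m), r) := by
    intro r
    have : ((⟨1, by omega⟩ : Fin m), r) ∈ H.neighborSet (v0 r) := by
      rw [hstep1 r]; left; rfl
    exact this
  have hadjwrap : ∀ r, H.Adj (v0 r) ((⟨m - 1, by omega⟩ : Fin m), r - l) := by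
    intro r
    have : ((⟨m - 1, by omega⟩ : Fin m), r - l) ∈ H.neighborSet (v0 r) := by
      rw [hstep1 r]; right; rfl
    exact this
  -- main induction on columns
  have main : ∀ k, ∀ hk : k < m,
      (∀ r, H.connectedComponentMk ((⟨k, hk⟩ : Fin m), r) = K r) ∧
      (∀ hk1 : k + 1 < m, ∀ r, H.Adj ((⟨k, hk⟩ : Fin m), r) ((⟨k + 1, hk1⟩ : Fin m), r)) := by
    intro k
    induction k with
    | zero =>
      intro hk
      exact ⟨fun r => rfl, fun hk1 r => hadj01 r⟩
    | succ k ih =>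
      intro hk
      obtain ⟨ihc, iha⟩ := ih (by omega)
      have hAdjk : ∀ r, H.Adj ((⟨k, by omega⟩ : Fin m), r) ((⟨k + 1, hk⟩ : Fin m), r) :=
        iha hk
      have hcomp : ∀ r, H.connectedComponentMk ((⟨k + 1, hk⟩ : Fin m), r) = K r := by
        intro r
        exact (ConnectedComponent.sound (hAdjk r).symm.reachable).trans (ihc r)
      refine ⟨hcomp, ?_⟩
      intro hk2 r
      have hforce : H.neighborSet ((⟨k + 1, hk⟩ : Fin m), r) =
          {((⟨k, by omega⟩ : Fin m), r), ((⟨k + 2, by omega⟩ : Fin m), r)} := by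
        have hsub := nbrs_mid hm l (k + 1) (by omega) (by omega) r
        have heq1 : (⟨k + 1 - 1, by omega⟩ : Fin m) = (⟨k, by omega⟩ : Fin m) := rfl
        have heq2 : (⟨k + 1 + 1, by omega⟩ : Fin m) = (⟨k + 2, by omega⟩ : Fin m) := rfl
        rw [heq1, heq2] at hsub
        apply force_two hle (hdeg _) hsub
        · exact hnovert _ ((⟨k + 1, hk⟩ : Fin m), r + 1) (z_self1 r) (hcomp r) (hcomp (r + 1))
        · exact hnovert _ ((⟨k + 1, hk⟩ : Fin m), r + 2) (z_self2 r) (hcomp r) (hcomp (r + 2))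
        · intro h
          have h1 : (k : ℕ) = k + 2 := congrArg (fun p => (p.1 : Fin m).val) h
          omega
      have : ((⟨k + 2, by omega⟩ : Fin m), r) ∈ H.neighborSet ((⟨k + 1, hk⟩ : Fin m), r) := by
        rw [hforce]; right; rfl
      have hadj : H.Adj ((⟨k + 1, hk⟩ : Fin m), r) ((⟨k + 2, by omega⟩ : Fin m), r) := this
      exact hadj
  -- conclusion
  have hlast : ∀ r, H.connectedComponentMk ((⟨m - 1, by omega⟩ : Fin m), r) = K r :=
    (main (m - 1) (by omega)).1
  have hwrapcomp : ∀ r, H.connectedComponentMk ((⟨m - 1, by omega⟩ : Fin m), r - l) = K r := by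
    intro r
    exact (ConnectedComponent.sound (hadjwrap r).symm.reachable)
  have : ∀ r : ZMod 3, r - l = r := fun r => hKdist _ _ ((hlast (r - l)).symm.trans (hwrapcomp r))
  exact hl (z_subl 0 l (this 0))

end Impossible

section M3
lemma noSC_m3 : ¬ SpanningCyclable (pseudoProd 3 3 0) 3 := by
  intro hSC
  set u : Fin 3 × ZMod 3 := ((⟨0, by omega⟩ : Fin 3), (0 : ZMod 3)) with hu
  set v : Fin 3 × ZMod 3 := ((⟨0, by omega⟩ : Fin 3), (1 : ZMod 3)) with hv
  set w : Fin 3 × ZMod 3 := ((⟨1, by omega⟩ : Fin 3), (0 : ZMod 3)) with hw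
  set p1 : Fin 3 × ZMod 3 := ((⟨0, by omega⟩ : Fin 3), (2 : ZMod 3)) with hp1
  set p2 : Fin 3 × ZMod 3 := ((⟨2, by omega⟩ : Fin 3), (0 : ZMod 3)) with hp2
  set q1 : Fin 3 × ZMod 3 := ((⟨1, by omega⟩ : Fin 3), (1 : ZMod 3)) with hq1
  set q2 : Fin 3 × ZMod 3 := ((⟨2, by omega⟩ : Fin 3), (1 : ZMod 3)) with hq2
  set s1 : Fin 3 × ZMod 3 := ((⟨1, by omega⟩ : Fin 3), (2 : ZMod 3)) with hs1
  obtain ⟨H, ⟨hle, hdeg⟩, hsep⟩ := hSC {u, v, w} (by decide)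
  have hmemu : u ∈ ({u, v, w} : Finset (Fin 3 × ZMod 3)) := by simp
  have hmemv : v ∈ ({u, v, w} : Finset (Fin 3 × ZMod 3)) := by simp
  have hmemw : w ∈ ({u, v, w} : Finset (Fin 3 × ZMod 3)) := by simp
  have huniq : ∀ a b : Fin 3 × ZMod 3, a ∈ ({u, v, w} : Finset (Fin 3 × ZMod 3)) →
      b ∈ ({u, v, w} : Finset (Fin 3 × ZMod 3)) →
      H.connectedComponentMk a = H.connectedComponentMk b → a = b := by
    intro a b ha hb h
    obtain ⟨c, _, hc⟩ := hsep (H.connectedComponentMk b)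
    exact (hc a ⟨ha, h⟩).trans (hc b ⟨hb, rfl⟩).symm
  have hKuv : H.connectedComponentMk u ≠ H.connectedComponentMk v :=
    fun h => by have := huniq u v hmemu hmemv h; rw [hu, hv] at this; exact absurd this (by decide)
  have hKuw : H.connectedComponentMk u ≠ H.connectedComponentMk w :=
    fun h => by have := huniq u w hmemu hmemw h; rw [hu, hw] at this; exact absurd this (by decide)
  have hKvw : H.connectedComponentMk v ≠ H.connectedComponentMk w :=
    fun h => by have := huniq v w hmemv hmemw h; rw [hv, hw] at this; exact absurd this (by decide)
  have hadjcomp : ∀ a b : Fin 3 × ZMod 3, b ∈ H.neighborSet a →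
      H.connectedComponentMk a = H.connectedComponentMk b := by
    intro a b hb
    exact ConnectedComponent.sound (mem_neighborSet H a b |>.mp hb).reachable
  -- neighbours of u
  have hsubU : (pseudoProd 3 3 0).neighborSet u ⊆ {v, w, p1, p2} := by
    intro z hz
    have h4 := nbrs_col0 (m := 3) (by omega) 0 0 hz
    simp only [Set.mem_insert_iff, Set.mem_singleton_iff] at h4 ⊢
    rcases h4 with rfl | rfl | rfl | rfl
    · left; decide
    · right; right; left; decide
    · right; left; decide
    · right; right; right; decide
  have hNU : H.neighborSet u = {p1, p2} := by
    apply force_two hle (hdeg u) hsubU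
    · exact fun hz => hKuv (hadjcomp u v hz)
    · exact fun hz => hKuw (hadjcomp u w hz)
    · decide
  have hKp1 : H.connectedComponentMk u = H.connectedComponentMk p1 :=
    hadjcomp u p1 (by rw [hNU]; left; rfl)
  have hKp2 : H.connectedComponentMk u = H.connectedComponentMk p2 :=
    hadjcomp u p2 (by rw [hNU]; right; rfl)
  -- neighbours of v
  have hsubV : (pseudoProd 3 3 0).neighborSet v ⊆ {p1, u, q1, q2} := by
    intro z hz
    have h4 := nbrs_col0 (m := 3) (by omega) 0 1 hz
    simp only [Set.mem_insert_iff, Set.mem_singleton_iff] at h4 ⊢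
    rcases h4 with rfl | rfl | rfl | rfl
    · left; decide
    · right; left; decide
    · right; right; left; decide
    · right; right; right; decide
  have hNV : H.neighborSet v = {q1, q2} := by
    apply force_two hle (hdeg v) hsubV
    · exact fun hz => hKuv (hKp1.trans (hadjcomp v p1 hz).symm)
    · exact fun hz => hKuv ((hadjcomp v u hz).symm)
    · decide
  have hKq1v : H.connectedComponentMk v = H.connectedComponentMk q1 :=
    hadjcomp v q1 (by rw [hNV]; left; rfl)
  -- neighbours of w
  have hsubW : (pseudoProd 3 3 0).neighborSet w ⊆ {u, p2, q1, s1} := by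
    intro z hz
    have h4 := nbrs_mid (m := 3) (by omega) 0 1 (by omega) (by omega) 0 hz
    simp only [Set.mem_insert_iff, Set.mem_singleton_iff] at h4 ⊢
    rcases h4 with rfl | rfl | rfl | rfl
    · right; right; left; decide
    · right; right; right; decide
    · left; decide
    · right; left; decide
  have hNW : H.neighborSet w = {q1, s1} := by
    apply force_two hle (hdeg w) hsubW
    · exact fun hz => hKuw ((hadjcomp w u hz).symm)
    · exact fun hz => hKuw (hKp2.trans (hadjcomp w p2 hz).symm)
    · decide
  have hKq1w : H.connectedComponentMk w = H.connectedComponentMk q1 :=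
    hadjcomp w q1 (by rw [hNW]; left; rfl)
  exact hKvw (hKq1v.trans hKq1w.symm)
end M3

/-- For `m ≥ 3` and `ℓ ∈ ZMod 3`, the pseudo-Cartesian product
`C_m □_ℓ C_3` is 3-spanning cyclable iff `m ≥ 4` and `ℓ = 0`. -/
theorem statement_11 (m : ℕ) (hm : 3 ≤ m) (l : ZMod 3) :
    SpanningCyclable (pseudoProd m 3 l) 3 ↔ (4 ≤ m ∧ l = 0) := by
  constructor
  · intro hSC
    have hl0 : l = 0 := by
      by_contra hl
      exact noSC_lne hm l hl hSC
    subst hl0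
    refine ⟨?_, rfl⟩
    by_contra h4
    have hm3 : m = 3 := by omega
    subst hm3
    exact noSC_m3 hSC
  · rintro ⟨hm4, rfl⟩
    exact backward hm4
end
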